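/- Expected one-step entropy change formula: with P^n a density on X with CDF F^n, points x_l < x_r, probabilities g = g^n(x_l,x_r) and gbar = gbar^n(x_l,x_r) in (0,1), and U_1, U_0 the normalizers, the expected posterior entropy minus prior entropy equals [g log2 g + (1-g) log2(1-g)] (F^n(x_r) - F^n(x_l) - 1) - [gbar log2 gbar + (1-gbar) log2(1-gbar)] (F^n(x_r) - F^n(x_l)) + U_1 log2 U_1 + U_0 log2 U_0. -/
import Mathlib


open MeasureTheory Set

private lemma logb_mul_aux (c t : ℝ) (hc : 0 < c) (ht : 0 ≤ t) :
    (c * t) * Real.logb 2 (c * t)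
      = c * Real.logb 2 c * t + c * (t * Real.logb 2 t) := by
  rcases eq_or_lt_of_le ht with h | h
  · simp [← h]
  · rw [Real.logb_mul hc.ne' h.ne']; ring

private lemma piecewise_integral (xl xr : ℝ) (hlt : xl < xr) (a b c : ℝ)
    (f : ℝ → ℝ) (hf : Integrable f) :
    Integrable (fun x => (if x ≤ xl then a else if x < xr then b else c) * f x) ∧
    ∫ x, (if x ≤ xl then a else if x < xr then b else c) * f x
      = a * (∫ x in Iic xl, f x) + b * (∫ x in Ioo xl xr, f x)
        + c * (∫ x in Ici xr, f x) := by
  have hfun : (fun x => (if x ≤ xl then a else if x < xr then b else c) * f x)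
      = fun x => (Iic xl).indicator (fun x => a * f x) x
        + (Ioo xl xr).indicator (fun x => b * f x) x
        + (Ici xr).indicator (fun x => c * f x) x := by
    funext x
    by_cases h1 : x ≤ xl
    · have h2 : x ∉ Ioo xl xr := fun h => absurd h1 (not_le.2 h.1)
      have h3 : x ∉ Ici xr := fun h => absurd (h1.trans_lt hlt) (not_lt.2 h)
      simp [h1, Set.indicator_of_notMem h2, Set.indicator_of_notMem h3,
        Set.indicator_of_mem (show x ∈ Iic xl from h1)]
    · by_cases h2 : x < xr
      · have h3 : x ∈ Ioo xl xr := ⟨not_le.1 h1, h2⟩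
        have h4 : x ∉ Ici xr := not_le.2 h2
        have h5 : x ∉ Iic xl := h1
        simp [h1, h2, Set.indicator_of_mem h3, Set.indicator_of_notMem h4,
          Set.indicator_of_notMem h5]
      · have h3 : x ∈ Ici xr := not_lt.1 h2
        have h4 : x ∉ Ioo xl xr := fun h => h2 h.2
        have h5 : x ∉ Iic xl := h1
        simp [h1, h2, Set.indicator_of_mem h3, Set.indicator_of_notMem h4,
          Set.indicator_of_notMem h5]
  have i1 : Integrable ((Iic xl).indicator (fun x => a * f x)) :=
    (hf.const_mul a).indicator measurableSet_Iic
  have i2 : Integrable ((Ioo xl xr).indicator (fun x => b * f x)) :=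
    (hf.const_mul b).indicator measurableSet_Ioo
  have i3 : Integrable ((Ici xr).indicator (fun x => c * f x)) :=
    (hf.const_mul c).indicator measurableSet_Ici
  have i12 : Integrable (fun x => (Iic xl).indicator (fun x => a * f x) x
      + (Ioo xl xr).indicator (fun x => b * f x) x) := i1.add i2
  constructor
  · rw [hfun]; exact i12.add i3
  · rw [hfun, integral_add i12 i3, integral_add i1 i2,
      integral_indicator measurableSet_Iic, integral_indicator measurableSet_Ioo,
      integral_indicator measurableSet_Ici, integral_const_mul, integral_const_mul,
      integral_const_mul]

/-- Expected one-step entropy change formula of SBES (equation (30)): the expected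
differential entropy (in bits) of the posterior minus the entropy of the prior has the
stated closed form in terms of `g`, `ḡ`, `F^n` and the normalizers `U₁`, `U₀`. -/
theorem sbes_expected_entropy_change
    (Pn : ℝ → ℝ) (hnn : ∀ x, 0 ≤ Pn x) (hint : Integrable Pn)
    (hone : ∫ x, Pn x = 1)
    (hlogint : Integrable (fun x => Pn x * Real.logb 2 (Pn x)))
    (xl xr : ℝ) (hlt : xl < xr)
    (g gbar : ℝ) (hg : g ∈ Set.Ioo (0 : ℝ) 1) (hgbar : gbar ∈ Set.Ioo (0 : ℝ) 1)
    (F : ℝ → ℝ) (hF : ∀ x, F x = ∫ t in Set.Iic x, Pn t)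
    (U₁ U₀ : ℝ)
    (hU₁ : U₁ = (1 - g) * F xl + (1 - gbar) * (F xr - F xl) + g * (1 - F xr))
    (hU₀ : U₀ = g * F xl + gbar * (F xr - F xl) + (1 - g) * (1 - F xr))
    (hU₁pos : 0 < U₁) (hU₀pos : 0 < U₀)
    (P1 P0 : ℝ → ℝ)
    (hP1 : ∀ x, P1 x = (if x ≤ xl then (1 - g) / U₁
                        else if x < xr then (1 - gbar) / U₁
                        else g / U₁) * Pn x)
    (hP0 : ∀ x, P0 x = (if x ≤ xl then g / U₀
                        else if x < xr then gbar / U₀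
                        else (1 - g) / U₀) * Pn x) :
    U₁ * (-∫ x, P1 x * Real.logb 2 (P1 x))
      + U₀ * (-∫ x, P0 x * Real.logb 2 (P0 x))
      - (-∫ x, Pn x * Real.logb 2 (Pn x))
    = (g * Real.logb 2 g + (1 - g) * Real.logb 2 (1 - g)) * (F xr - F xl - 1)
      - (gbar * Real.logb 2 gbar + (1 - gbar) * Real.logb 2 (1 - gbar))
          * (F xr - F xl)
      + U₁ * Real.logb 2 U₁ + U₀ * Real.logb 2 U₀ := by
  obtain ⟨hg0, hg1⟩ := hg
  obtain ⟨hgb0, hgb1⟩ := hgbar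
  have hg1' : (0:ℝ) < 1 - g := by linarith
  have hgb1' : (0:ℝ) < 1 - gbar := by linarith
  -- basic set integrals of Pn
  have hI1 : ∫ x in Iic xl, Pn x = F xl := (hF xl).symm
  have hI2 : ∫ x in Ioo xl xr, Pn x = F xr - F xl := by
    have h1 : ∫ x in Iic xr, Pn x
        = (∫ x in Iic xl, Pn x) + ∫ x in Ioc xl xr, Pn x := by
      rw [← Iic_union_Ioc_eq_Iic hlt.le]
      exact setIntegral_union (f := Pn) (s := Iic xl) (t := Ioc xl xr) (μ := volume)
        (Iic_disjoint_Ioc le_rfl) measurableSet_Ioc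
        hint.integrableOn hint.integrableOn
    rw [← integral_Ioc_eq_integral_Ioo]
    have h2 := hF xr
    have h3 := hF xl
    linarith [h1]
  have hI3 : ∫ x in Ici xr, Pn x = 1 - F xr := by
    have h1 := integral_add_compl (measurableSet_Iic (a := xr)) hint
    rw [compl_Iic] at h1
    rw [integral_Ici_eq_integral_Ioi]
    have h2 := hF xr
    linarith [h1]
  -- set integrals of Pn * logb Pn
  set A := ∫ x in Iic xl, Pn x * Real.logb 2 (Pn x) with hA
  set B := ∫ x in Ioo xl xr, Pn x * Real.logb 2 (Pn x) with hB
  set C := ∫ x in Ici xr, Pn x * Real.logb 2 (Pn x) with hC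
  have hABC : A + B + C = ∫ x, Pn x * Real.logb 2 (Pn x) := by
    have h := (piecewise_integral xl xr hlt 1 1 1 _ hlogint).2
    simp only [ite_self, one_mul] at h
    rw [hA, hB, hC]; linarith [h]
  -- decomposition of ∫ P1 logb P1
  have key : ∀ (U : ℝ) (hU : 0 < U) (a b c : ℝ) (ha : 0 < a) (hb : 0 < b) (hc : 0 < c)
      (P : ℝ → ℝ)
      (hP : ∀ x, P x = (if x ≤ xl then a / U else if x < xr then b / U else c / U) * Pn x),
      U * (∫ x, P x * Real.logb 2 (P x))
        = a * (Real.logb 2 a - Real.logb 2 U) * F xl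
          + b * (Real.logb 2 b - Real.logb 2 U) * (F xr - F xl)
          + c * (Real.logb 2 c - Real.logb 2 U) * (1 - F xr)
          + a * A + b * B + c * C := by
    intro U hU a b c ha hb hc P hP
    have hpt : ∀ x, P x * Real.logb 2 (P x)
        = (if x ≤ xl then (a/U) * Real.logb 2 (a/U)
            else if x < xr then (b/U) * Real.logb 2 (b/U)
            else (c/U) * Real.logb 2 (c/U)) * Pn x
          + (if x ≤ xl then a/U else if x < xr then b/U else c/U)
              * (Pn x * Real.logb 2 (Pn x)) := by
      intro x
      rw [hP x]
      split_ifs with h1 h2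
      · exact logb_mul_aux _ _ (div_pos ha hU) (hnn x)
      · exact logb_mul_aux _ _ (div_pos hb hU) (hnn x)
      · exact logb_mul_aux _ _ (div_pos hc hU) (hnn x)
    have int1 := piecewise_integral xl xr hlt ((a/U) * Real.logb 2 (a/U))
      ((b/U) * Real.logb 2 (b/U)) ((c/U) * Real.logb 2 (c/U)) Pn hint
    have int2 := piecewise_integral xl xr hlt (a/U) (b/U) (c/U) _ hlogint
    have hIeq : ∫ x, P x * Real.logb 2 (P x)
        = ((a/U) * Real.logb 2 (a/U)) * F xl
          + ((b/U) * Real.logb 2 (b/U)) * (F xr - F xl)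
          + ((c/U) * Real.logb 2 (c/U)) * (1 - F xr)
          + ((a/U) * A + (b/U) * B + (c/U) * C) := by
      calc ∫ x, P x * Real.logb 2 (P x)
          = ∫ x, ((if x ≤ xl then (a/U) * Real.logb 2 (a/U)
              else if x < xr then (b/U) * Real.logb 2 (b/U)
              else (c/U) * Real.logb 2 (c/U)) * Pn x
            + (if x ≤ xl then a/U else if x < xr then b/U else c/U)
                * (Pn x * Real.logb 2 (Pn x))) := by
            exact integral_congr_ae (Filter.Eventually.of_forall hpt)
        _ = _ := by
            rw [integral_add int1.1 int2.1, int1.2, int2.2, hI1, hI2, hI3]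
    rw [hIeq, Real.logb_div ha.ne' hU.ne', Real.logb_div hb.ne' hU.ne',
      Real.logb_div hc.ne' hU.ne']
    field_simp
    ring
  have e1 := key U₁ hU₁pos (1 - g) (1 - gbar) g hg1' hgb1' hg0 P1 hP1
  have e0 := key U₀ hU₀pos g gbar (1 - g) hg0 hgb0 hg1' P0 hP0
  linarith [mul_comm U₁ (Real.logb 2 U₁), mul_comm U₀ (Real.logb 2 U₀),
    congrArg (· * Real.logb 2 U₁) hU₁, congrArg (· * Real.logb 2 U₀) hU₀]
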